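/- A sufficient stability condition for periodic ARMA_K: if Π_{τ=0}^{K-1} (|θ_τ| + |ψ_τ| ρ(M)) < 1, then ρ(Γ_{K-1}⋯Γ_0) < 1, where Γ_τ = θ_τ I + ψ_τ M. -/

import Mathlib

open scoped ENNReal

/-- Sufficient stability condition for periodic ARMA_K: if
`∏_{τ<K} (|θ_τ| + |ψ_τ| ρ(M)) < 1`, then `ρ(Γ_{K-1} ⋯ Γ_0) < 1`, where
`Γ_τ = θ_τ I + ψ_τ M`. -/
theorem armaK_periodic_stability {N K : ℕ} (M : Matrix (Fin N) (Fin N) ℝ)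
    (hM : M.IsSymm) (θ ψ : ℕ → ℂ)
    (hstab : ∏ τ ∈ Finset.range K,
        ((‖θ τ‖₊ : ℝ≥0∞) + (‖ψ τ‖₊ : ℝ≥0∞) * spectralRadius ℂ (M.map Complex.ofReal)) < 1) :
    spectralRadius ℂ
        (((List.range K).reverse.map (fun τ =>
          θ τ • (1 : Matrix (Fin N) (Fin N) ℂ) + ψ τ • M.map Complex.ofReal)).prod) < 1 := by
  -- trivial cases
  rcases Nat.eq_zero_or_pos K with hK | hK
  · subst hK; simp at hstab
  rcases Nat.eq_zero_or_pos N with hN | hN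
  · subst hN
    have hsp : spectrum ℂ
        (((List.range K).reverse.map (fun τ =>
          θ τ • (1 : Matrix (Fin 0) (Fin 0) ℂ) + ψ τ • M.map Complex.ofReal)).prod) = ∅ := by
      ext z
      simp [spectrum.mem_iff, isUnit_of_subsingleton]
    rw [spectralRadius, hsp]
    simp
  haveI : Nonempty (Fin N) := ⟨⟨0, hN⟩⟩
  -- set up the L2 operator norm C*-algebra structure
  letI : MetricSpace (Matrix (Fin N) (Fin N) ℂ) := Matrix.instL2OpMetricSpace
  letI : NormedAddCommGroup (Matrix (Fin N) (Fin N) ℂ) := Matrix.instL2OpNormedAddCommGroup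
  letI : NormedRing (Matrix (Fin N) (Fin N) ℂ) := Matrix.instL2OpNormedRing
  letI : NormedSpace ℂ (Matrix (Fin N) (Fin N) ℂ) := Matrix.instL2OpNormedSpace
  letI : NormedAlgebra ℂ (Matrix (Fin N) (Fin N) ℂ) := Matrix.instL2OpNormedAlgebra
  letI : CStarRing (Matrix (Fin N) (Fin N) ℂ) := Matrix.instCStarRing
  haveI : CompleteSpace (Matrix (Fin N) (Fin N) ℂ) := FiniteDimensional.complete ℂ _
  letI : CStarAlgebra (Matrix (Fin N) (Fin N) ℂ) := ⟨⟩
  haveI : NormOneClass (Matrix (Fin N) (Fin N) ℂ) := ⟨by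
    rw [Matrix.cstar_norm_def, map_one]
    exact ContinuousLinearMap.norm_id⟩
  set A : Matrix (Fin N) (Fin N) ℂ := M.map Complex.ofReal with hA_def
  have hA : IsSelfAdjoint A := by
    show star A = A
    rw [Matrix.star_eq_conjTranspose]
    ext i j
    have := hM.apply i j
    simp [hA_def, Matrix.conjTranspose_apply, Matrix.map_apply, this]
  have hρ : spectralRadius ℂ A = (‖A‖₊ : ℝ≥0∞) := by
    have h := hA.spectralRadius_eq_nnnorm
    exact h
  set Γ : ℕ → Matrix (Fin N) (Fin N) ℂ :=
    fun τ => θ τ • (1 : Matrix (Fin N) (Fin N) ℂ) + ψ τ • A with hΓ_def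
  have hΓ : ∀ τ, ‖Γ τ‖₊ ≤ ‖θ τ‖₊ + ‖ψ τ‖₊ * ‖A‖₊ := by
    intro τ
    calc ‖Γ τ‖₊ ≤ ‖θ τ • (1 : Matrix (Fin N) (Fin N) ℂ)‖₊ + ‖ψ τ • A‖₊ := nnnorm_add_le _ _
    _ = ‖θ τ‖₊ * ‖(1 : Matrix (Fin N) (Fin N) ℂ)‖₊ + ‖ψ τ‖₊ * ‖A‖₊ := by
        rw [nnnorm_smul, nnnorm_smul]
    _ = ‖θ τ‖₊ + ‖ψ τ‖₊ * ‖A‖₊ := by rw [nnnorm_one, mul_one]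
  have hprod : ‖((List.range K).reverse.map Γ).prod‖₊
      ≤ ∏ τ ∈ Finset.range K, (‖θ τ‖₊ + ‖ψ τ‖₊ * ‖A‖₊) := by
    refine (List.nnnorm_prod_le _).trans ?_
    rw [List.map_map, List.map_reverse, List.prod_reverse]
    show ∏ τ ∈ Finset.range K, ‖Γ τ‖₊ ≤ _
    exact Finset.prod_le_prod (fun i _ => zero_le) (fun i _ => hΓ i)
  have hrad : spectralRadius ℂ ((List.range K).reverse.map Γ).prod
      ≤ (‖((List.range K).reverse.map Γ).prod‖₊ : ℝ≥0∞) := by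
    have h := spectrum.spectralRadius_le_nnnorm (𝕜 := ℂ) ((List.range K).reverse.map Γ).prod
    exact h
  calc spectralRadius ℂ ((List.range K).reverse.map Γ).prod
      ≤ (‖((List.range K).reverse.map Γ).prod‖₊ : ℝ≥0∞) := hrad
    _ ≤ ((∏ τ ∈ Finset.range K, (‖θ τ‖₊ + ‖ψ τ‖₊ * ‖A‖₊) : NNReal) : ℝ≥0∞) := by
        exact_mod_cast hprod
    _ = ∏ τ ∈ Finset.range K,
          ((‖θ τ‖₊ : ℝ≥0∞) + (‖ψ τ‖₊ : ℝ≥0∞) * spectralRadius ℂ A) := by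
        rw [hρ]; push_cast; rfl
    _ < 1 := hstab
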